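/- Let k ≥ 2, n ≥ 1 be integers and δ ∈ ℂ nonzero and not a root of unity. Suppose the numbers t_j := δ^j·a − 2/(k−1) (0 ≤ j ≤ k), with a := (δ^{n−1} − 1)/(δ^{n+k} − 1)·(k+1)/(k−1), satisfy Σ_{j=0}^k (t_j + 2/(k−1)) = (k+1)/(k−1)·(1/δ + 1). Then (δ^{n+k} − 1)(δ² − 1) = δ(δ^{k+1} − 1)(δ^{n−1} − 1). -/

import Mathlib

/-- Derivation of the defining polynomial of the multiplier δ from the two
expressions for Σ t_j. -/
theorem stmt_12 (k n : ℕ) (hk : 2 ≤ k) (hn : 1 ≤ n) (δ : ℂ)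
    (hδ0 : δ ≠ 0) (hroots : ∀ m : ℕ, 0 < m → δ ^ m ≠ 1)
    (hnk : δ ^ (n + k) ≠ 1) (hk1 : δ ^ (k + 1) ≠ 1) (h1 : δ ≠ 1)
    (a : ℂ)
    (ha : a = (δ ^ (n - 1) - 1) / (δ ^ (n + k) - 1) * (((k : ℂ) + 1) / ((k : ℂ) - 1)))
    (t : ℕ → ℂ) (ht : ∀ j, t j = δ ^ j * a - 2 / ((k : ℂ) - 1))
    (hsum : ∑ j ∈ Finset.range (k + 1), (t j + 2 / ((k : ℂ) - 1)) =
      ((k : ℂ) + 1) / ((k : ℂ) - 1) * (1 / δ + 1)) :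
    (δ ^ (n + k) - 1) * (δ ^ 2 - 1) = δ * (δ ^ (k + 1) - 1) * (δ ^ (n - 1) - 1) := by
  have hkc : ((k : ℂ) - 1) ≠ 0 := by
    have : (k : ℂ) ≠ 1 := by exact_mod_cast (by omega : k ≠ 1)
    simpa [sub_eq_zero]
  have hkp : ((k : ℂ) + 1) ≠ 0 := by
    have : (k : ℂ) ≠ -1 := by
      intro h
      have : ((k:ℝ) : ℂ) = ((-1 : ℝ) : ℂ) := by push_cast; simpa using h
      have := Complex.ofReal_injective this
      have hk0 : (0:ℝ) ≤ (k:ℝ) := Nat.cast_nonneg k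
      linarith
    simpa [add_eq_zero_iff_eq_neg]
  have hd1 : δ - 1 ≠ 0 := sub_ne_zero.mpr h1
  have hnk0 : δ ^ (n + k) - 1 ≠ 0 := sub_ne_zero.mpr hnk
  have hs : (∑ j ∈ Finset.range (k + 1), δ ^ j) * a =
      ((k : ℂ) + 1) / ((k : ℂ) - 1) * (1 / δ + 1) := by
    rw [Finset.sum_mul]
    rw [← hsum]
    refine Finset.sum_congr rfl fun j _ => ?_
    rw [ht j]; ring
  rw [geom_sum_eq h1, ha] at hs
  field_simp at hs


  have h2 : (δ ^ (k + 1) - 1) * (δ ^ (n - 1) - 1) * δ * (((k:ℂ) + 1) * ((k:ℂ) - 1)) =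
      (δ ^ (n + k) - 1) * (δ ^ 2 - 1) * (((k:ℂ) + 1) * ((k:ℂ) - 1)) := by
    linear_combination (((k:ℂ) + 1) * ((k:ℂ) - 1)) * hs
  have h3 := mul_right_cancel₀ (mul_ne_zero hkp hkc) h2
  linear_combination -h3
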